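/- Let h ⊆ co(V) be a Lie subalgebra of the conformal linear Lie algebra of a pseudo-Euclidean vector space (V,g) with dim V ≥ 3. If there exists a linear form ξ ∈ V* with g(ξ♯, ξ♯) ≠ 0 such that T^ξ belongs to the first prolongation of h (i.e. T^ξ_X ∈ h for every X ∈ V), then h = co(V). -/

import Mathlib

/-- The conformal Killing endomorphism `T^ξ_X` associated to the 1-form `ξ = g(s,·)`
(with `ξ♯ = s`): `Z ↦ ξ(X) Z + ξ(Z) X − g(X,Z) ξ♯`. -/
noncomputable def Txi {V : Type*} [AddCommGroup V] [Module ℝ V]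
    (g : LinearMap.BilinForm ℝ V) (s X : V) : Module.End ℝ V :=
  g s X • (LinearMap.id : V →ₗ[ℝ] V) + (g s).smulRight X - (g X).smulRight s

/-- `A` belongs to the conformal linear Lie algebra `co(V) = ℝ·id ⊕ so(V)`. -/
def IsConf {V : Type*} [AddCommGroup V] [Module ℝ V]
    (g : LinearMap.BilinForm ℝ V) (A : Module.End ℝ V) : Prop :=
  ∃ c : ℝ, ∀ X Y : V, g (A X) Y + g X (A Y) = 2 * c * g X Y

attribute [local instance 100] LieRing.ofAssociativeRing

/-- The skew endomorphism `v ∧ w : Z ↦ g(v,Z) w − g(w,Z) v`. -/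
noncomputable def Wdg {V : Type*} [AddCommGroup V] [Module ℝ V]
    (g : LinearMap.BilinForm ℝ V) (v w : V) : Module.End ℝ V :=
  (g v).smulRight w - (g w).smulRight v

lemma lie_Txi {V : Type*} [AddCommGroup V] [Module ℝ V]
    (g : LinearMap.BilinForm ℝ V) (hsymm : g.IsSymm) (s X Y : V) :
    ⁅Txi g s X, Txi g s Y⁆ =
      g s X • Wdg g Y s + g s Y • Wdg g s X + g s s • Wdg g X Y := by
  ext Z
  have h1 := hsymm.eq X Y
  have h2 := hsymm.eq X s
  have h3 := hsymm.eq Y s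
  simp only [Txi, Wdg, Ring.lie_def, LinearMap.sub_apply, LinearMap.add_apply,
    Module.End.mul_apply, LinearMap.smul_apply, LinearMap.smulRight_apply,
    LinearMap.id_apply, map_sub, map_add, map_smul, smul_eq_mul,
    RingHom.id_apply] at *
  rw [h1, h2, h3]
  module

/-- If a Lie subalgebra `h ⊆ co(V)` of a pseudo-Euclidean space of dimension ≥ 3 has
`T^ξ` in its first prolongation for some `ξ` with `g(ξ♯,ξ♯) ≠ 0`, then `h = co(V)`. -/
theorem subalgebra_with_nondegenerate_prolongation_is_co
    {V : Type*} [AddCommGroup V] [Module ℝ V] [FiniteDimensional ℝ V]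
    (g : LinearMap.BilinForm ℝ V) (hsymm : g.IsSymm) (hnd : g.Nondegenerate)
    (hdim : 3 ≤ Module.finrank ℝ V)
    (h : LieSubalgebra ℝ (Module.End ℝ V))
    (hco : ∀ A ∈ h, IsConf g A)
    (s : V) (hs : g s s ≠ 0)
    (hT : ∀ X : V, Txi g s X ∈ h) :
    ∀ A : Module.End ℝ V, A ∈ h ↔ IsConf g A := by
  have gsymm : ∀ x y : V, g x y = g y x := fun x y => by simpa using hsymm.eq x y
  -- the identity is in h
  have hid : (1 : Module.End ℝ V) ∈ h := by
    have h1 : Txi g s s = g s s • (1 : Module.End ℝ V) := by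
      ext Z; simp [Txi]
    have := h.smul_mem (g s s)⁻¹ (hT s)
    rwa [h1, smul_smul, inv_mul_cancel₀ hs, one_smul] at this
  -- Wdg g s X ∈ h
  have hWs : ∀ X : V, Wdg g s X ∈ h := by
    intro X
    have key : Txi g s (X - ((g s s)⁻¹ * g s X) • s) = Wdg g s X := by
      ext Z
      simp only [Txi, Wdg, map_sub, map_smul, LinearMap.sub_apply, LinearMap.add_apply,
        LinearMap.smul_apply, LinearMap.smulRight_apply, LinearMap.id_apply, smul_eq_mul]
      match_scalars <;> field_simp <;> ring
    rw [← key]; exact hT _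
  -- all wedges are in h
  have hW : ∀ X Y : V, Wdg g X Y ∈ h := by
    intro X Y
    have hanti : ∀ v w : V, Wdg g v w = -Wdg g w v := by
      intro v w; ext Z; simp [Wdg]
    have key : Wdg g X Y = (g s s)⁻¹ •
        (⁅Txi g s X, Txi g s Y⁆ - g s X • Wdg g Y s - g s Y • Wdg g s X) := by
      rw [lie_Txi g hsymm s X Y]
      match_scalars <;> field_simp <;> ring
    rw [key]
    refine h.smul_mem _ (h.sub_mem (h.sub_mem (h.lie_mem (hT X) (hT Y)) ?_) ?_)
    · refine h.smul_mem _ ?_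
      rw [hanti Y s]; exact h.neg_mem (hWs Y)
    · exact h.smul_mem _ (hWs X)
  intro A
  constructor
  · exact hco A
  rintro ⟨c, hc⟩
  -- A - c • 1 is skew
  set A' := A - c • (1 : Module.End ℝ V) with hA'
  have hskew : ∀ X Y : V, g X (A' Y) = - g (A' X) Y := by
    intro X Y
    have h1 := hc X Y
    have h2 := gsymm X Y
    simp only [hA', LinearMap.sub_apply, LinearMap.smul_apply, Module.End.one_apply,
      map_sub, map_smul, smul_eq_mul]
    linarith
  suffices hA'h : A' ∈ h by
    have : A = A' + c • (1 : Module.End ℝ V) := by rw [hA']; abel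
    rw [this]
    exact h.add_mem hA'h (h.smul_mem c hid)
  -- orthogonal basis
  obtain ⟨b, hb⟩ := LinearMap.BilinForm.exists_orthogonal_basis (LinearMap.BilinForm.isSymm_iff.mp hsymm)
  have hdne : ∀ i, g (b i) (b i) ≠ 0 := by
    intro i hdi
    have hbz : b i = 0 := by
      apply hnd.1
      intro w
      rw [gsymm (b i) w]
      have hflip : (g.flip (b i) : V →ₗ[ℝ] ℝ) = 0 := by
        apply b.ext
        intro j
        simp only [LinearMap.flip_apply, LinearMap.zero_apply]
        rcases eq_or_ne j i with rfl | hji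
        · exact hdi
        · exact hb hji
      have := congrArg (fun f => f w) hflip
      simpa using this
    exact b.ne_zero i hbz
  have hortho : ∀ i j, g (b i) (b j) = if i = j then g (b i) (b i) else 0 := by
    intro i j
    rcases eq_or_ne i j with rfl | hij
    · simp
    · simp only [hij, if_false]
      exact hb hij
  -- vector ext via g (b i)
  have hvext : ∀ x y : V, (∀ i, g (b i) x = g (b i) y) → x = y := by
    intro x y hxy
    have hz : ∀ i, g (b i) (x - y) = 0 := by
      intro i; rw [map_sub, hxy i, sub_self]
    have hflip : (g.flip (x - y) : V →ₗ[ℝ] ℝ) = 0 := by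
      apply b.ext; intro j
      simpa using hz j
    have hall : ∀ w, g (x - y) w = 0 := by
      intro w
      rw [gsymm (x - y) w]
      have := congrArg (fun f => f w) hflip
      simpa using this
    exact sub_eq_zero.mp (hnd.1 _ hall)
  -- express A' as combination of wedges
  have hrep : A' = ∑ p : Fin (Module.finrank ℝ V) × Fin (Module.finrank ℝ V),
      (-(g (b p.1) (A' (b p.2))) /
        (2 * g (b p.1) (b p.1) * g (b p.2) (b p.2))) • Wdg g (b p.1) (b p.2) := by
    apply b.ext
    intro k
    apply hvext
    intro i
    rw [LinearMap.sum_apply, map_sum, Fintype.sum_prod_type]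
    have hterm : ∀ p q : Fin (Module.finrank ℝ V),
        g (b i) (((-(g (b p) (A' (b q))) /
          (2 * g (b p) (b p) * g (b q) (b q))) • Wdg g (b p) (b q)) (b k))
        = (if i = q then (if p = k then
              -(g (b p) (A' (b q))) / (2 * g (b p) (b p) * g (b q) (b q)) *
                (g (b p) (b p) * g (b i) (b i)) else 0) else 0)
          - (if q = k then (if i = p then
              -(g (b p) (A' (b q))) / (2 * g (b p) (b p) * g (b q) (b q)) *
                (g (b q) (b q) * g (b i) (b i)) else 0) else 0) := by
      intro p q
      simp only [LinearMap.smul_apply, Wdg, LinearMap.sub_apply, LinearMap.smulRight_apply,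
        map_smul, map_sub, smul_eq_mul]
      rw [hortho p k, hortho q k, hortho i q, hortho i p]
      split_ifs <;> ring
    simp only [hterm, Finset.sum_sub_distrib, Finset.sum_ite_eq, Finset.sum_ite_eq',
      Finset.mem_univ, if_true]
    have hsk : g (b k) (A' (b i)) = - g (b i) (A' (b k)) := by
      rw [hskew (b k) (b i), gsymm (A' (b k)) (b i)]
    rw [hsk]
    have hd_i := hdne i
    have hd_k := hdne k
    field_simp
    ring
  rw [hrep]
  exact Submodule.sum_mem h.toSubmodule (fun p _ => h.smul_mem _ (hW (b p.1) (b p.2)))
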